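/- arXiv:0807.1922 — 6 statements merged into one kernel-verified Lean document; each statement's English description precedes it below -/
import Mathlib

section
/- Let A be a 4×4 real antisymmetric matrix (Aᵀ = -A) whose complexification has repeating eigenvalues, i.e., the characteristic polynomial of A.map (algebraMap ℝ ℂ) has at most two distinct roots in ℂ. Then A is a scalar multiple of an orthogonal matrix: there exist a real number c and a 4×4 real matrix O with OᵀO = 1 such that A = c • O (equivalently, Aᵀ * A = (c^2) • 1). -/
open Matrix Polynomial

lemma eval_charpoly_aux {n : Type*} [DecidableEq n] [Fintype n] {R : Type*} [CommRing R]
    (M : Matrix n n R) (x : R) :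
    M.charpoly.eval x = (Matrix.diagonal (fun _ => x) - M).det := by
  rw [Matrix.charpoly, ← Polynomial.coe_evalRingHom, RingHom.map_det]
  congr 1
  ext i j
  by_cases h : i = j <;>
    simp [Matrix.charmatrix_apply, Matrix.diagonal, h]

/-- If `A` is a `4×4` real antisymmetric matrix whose complexification has repeating
eigenvalues (its characteristic polynomial over `ℂ` has at most two distinct roots),
then `A` is a scalar multiple of an orthogonal matrix. -/
theorem antisymmetric_repeating_eigenvalues_is_multiple_of_orthogonal
    (A : Matrix (Fin 4) (Fin 4) ℝ)
    (hanti : Aᵀ = -A)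
    (hrep : ((A.map (algebraMap ℝ ℂ)).charpoly.roots.toFinset).card ≤ 2) :
    ∃ (c : ℝ) (O : Matrix (Fin 4) (Fin 4) ℝ), Oᵀ * O = 1 ∧ A = c • O := by
  set B := A.map (algebraMap ℝ ℂ) with hB
  set q := B.charpoly with hq
  set R := q.roots with hR
  -- basic facts
  have hBt : Bᵀ = -B := by
    rw [hB, ← Matrix.transpose_map, hanti]
    ext i j; simp
  have hdiag : ∀ i, A i i = 0 := by
    intro i
    have := congrFun (congrFun hanti i) i
    simp only [Matrix.transpose_apply, Matrix.neg_apply] at this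
    linarith
  have htrB : B.trace = 0 := by
    simp [Matrix.trace, hB, Matrix.diag, hdiag]
  have hqmonic : q.Monic := B.charpoly_monic
  have hqne : q ≠ 0 := hqmonic.ne_zero
  have hdeg : q.natDegree = 4 := by
    rw [hq, B.charpoly_natDegree_eq_dim, Fintype.card_fin]
  have hcard : R.card = 4 := by
    rw [hR, ← hdeg]
    exact (Polynomial.splits_iff_card_roots.mp (IsAlgClosed.splits q))
  have hsum : R.sum = 0 := by
    rw [hR, ← Matrix.trace_eq_sum_roots_charpoly, htrB]
  -- evenness
  have heval : ∀ z : ℂ, q.eval (-z) = q.eval z := by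
    intro z
    rw [eval_charpoly_aux, eval_charpoly_aux]
    have h1 : Matrix.diagonal (fun _ : Fin 4 => -z) - B
        = -((Matrix.diagonal fun _ : Fin 4 => z) - B)ᵀ := by
      rw [Matrix.transpose_sub, Matrix.diagonal_transpose, hBt]
      ext i j; by_cases h : i = j <;> simp [Matrix.diagonal, h] <;> ring
    rw [h1, Matrix.det_neg, Matrix.det_transpose]
    norm_num
  have hnegroot : ∀ z ∈ R, -z ∈ R := by
    intro z hz
    rw [hR, Polynomial.mem_roots hqne] at hz ⊢
    rw [Polynomial.IsRoot, heval]
    exact hz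
  -- root structure: there is `a` with R = {a,a,-a,-a}
  have hstruct : ∃ a : ℂ, R = Multiset.replicate 2 a + Multiset.replicate 2 (-a) := by
    by_cases hall : ∀ z ∈ R, z = 0
    · refine ⟨0, ?_⟩
      have : R = Multiset.replicate 4 0 := by
        rw [Multiset.eq_replicate]
        exact ⟨hcard, hall⟩
      rw [this, neg_zero, ← Multiset.replicate_add]
    · push_neg at hall
      obtain ⟨a, haR, ha0⟩ := hall
      have hna : -a ∈ R := hnegroot a haR
      have hane : a ≠ -a := by
        intro h; apply ha0; linear_combination h/2
      have hsub : ({a, -a} : Finset ℂ) ⊆ R.toFinset := by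
        intro x hx
        simp only [Finset.mem_insert, Finset.mem_singleton] at hx
        rcases hx with rfl | rfl <;> simpa [Multiset.mem_toFinset]
      have hcard2 : ({a, -a} : Finset ℂ).card = 2 := by
        rw [Finset.card_insert_of_notMem (by simpa using hane), Finset.card_singleton]
      have hFeq : R.toFinset = {a, -a} :=
        (Finset.eq_of_subset_of_card_le hsub (by omega)).symm
      -- counts
      set m := R.count a with hm
      set k := R.count (-a) with hk
      have hmk : m + k = 4 := by
        have := Multiset.toFinset_sum_count_eq R
        rw [hFeq] at this
        rw [Finset.sum_insert (by simpa using hane), Finset.sum_singleton] at this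
        omega
      have hsum2 : (m : ℂ) * a + (k : ℂ) * (-a) = 0 := by
        have h := Multiset.toFinset_sum_count_nsmul_eq R
        rw [hFeq, Finset.sum_insert (by simpa using hane), Finset.sum_singleton] at h
        have h2 : R.sum = (m : ℂ) * a + (k : ℂ) * (-a) := by
          rw [← h]
          simp [Multiset.nsmul_singleton, Multiset.sum_replicate, nsmul_eq_mul]
          rfl
        rw [← h2, hsum]
      have hmk2 : (m : ℂ) = (k : ℂ) := by
        have : ((m : ℂ) - k) * a = 0 := by linear_combination hsum2
        rcases mul_eq_zero.mp this with h | h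
        · linear_combination h
        · exact absurd h ha0
      have hmkℕ : m = k := by exact_mod_cast hmk2
      have hm2 : m = 2 := by omega
      have hk2 : k = 2 := by omega
      refine ⟨a, ?_⟩
      ext x
      rw [Multiset.count_add, Multiset.count_replicate, Multiset.count_replicate]
      by_cases hxa : x = a
      · subst hxa
        rw [if_pos rfl, if_neg (Ne.symm hane)]
        simpa using hm2
      · by_cases hxna : x = -a
        · subst hxna
          rw [if_neg hane, if_pos rfl]
          simpa using hk2
        · have hxR : x ∉ R := by
            intro hxR
            have hxF : x ∈ R.toFinset := by simpa [Multiset.mem_toFinset]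
            rw [hFeq] at hxF
            simp only [Finset.mem_insert, Finset.mem_singleton] at hxF
            tauto
          rw [if_neg (fun h => hxa h.symm), if_neg (fun h => hxna h.symm),
            Multiset.count_eq_zero_of_notMem hxR]
  obtain ⟨a, hRa⟩ := hstruct
  -- q = (X^2 - C (a^2))^2
  have hqfact : q = (X ^ 2 - C (a ^ 2)) ^ 2 := by
    have hprod := Polynomial.prod_multiset_X_sub_C_of_monic_of_roots_card_eq hqmonic
      (by rw [← hR, hcard, hdeg])
    rw [← hprod, ← hR, hRa]
    simp only [Multiset.map_add, Multiset.map_replicate, Multiset.prod_add,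
      Multiset.prod_replicate, map_neg, map_pow]
    ring
  -- the coefficient is real
  set p := A.charpoly with hp
  have hmap : q = p.map (algebraMap ℝ ℂ) := by
    rw [hq, hp, hB, Matrix.charpoly_map]
  have haroot2 : a ^ 2 = ((a ^ 2).re : ℂ) := by
    by_cases ha0 : a = 0
    · simp [ha0]
    · have haR2 : a ∈ R := by rw [hRa]; simp
      have ha : q.eval a = 0 := by
        rw [hR, Polynomial.mem_roots hqne] at haR2
        exact haR2
      have hconjroot : (starRingEnd ℂ) a ∈ R := by
        rw [hR, Polynomial.mem_roots hqne]
        have h1 := Polynomial.aeval_conj (K := ℂ) p a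
        rw [Polynomial.aeval_def, Polynomial.aeval_def, Polynomial.eval₂_eq_eval_map,
          Polynomial.eval₂_eq_eval_map, ← hmap] at h1
        rw [Polynomial.IsRoot, h1, ha, map_zero]
      rw [hRa] at hconjroot
      simp only [Multiset.mem_add, Multiset.mem_replicate] at hconjroot
      have : (starRingEnd ℂ) a = a ∨ (starRingEnd ℂ) a = -a := by
        rcases hconjroot with h | h
        · exact Or.inl h.2
        · exact Or.inr h.2
      have hconj2 : (starRingEnd ℂ) (a ^ 2) = a ^ 2 := by
        rw [map_pow]
        rcases this with h | h <;> rw [h] <;> ring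
      exact (Complex.conj_eq_iff_re.mp hconj2).symm
  set t : ℝ := (a ^ 2).re with ht
  have hta : algebraMap ℝ ℂ t = a ^ 2 := by
    simpa using haroot2.symm
  have hpfact : p = (X ^ 2 - C t) ^ 2 := by
    apply Polynomial.map_injective (algebraMap ℝ ℂ) (algebraMap ℝ ℂ).injective
    rw [← hmap, hqfact]
    simp only [Polynomial.map_pow, Polynomial.map_sub, Polynomial.map_X, Polynomial.map_C, hta]
  -- Cayley-Hamilton
  have hCH := A.aeval_self_charpoly
  rw [← hp, hpfact] at hCH
  set M := A * A - t • (1 : Matrix (Fin 4) (Fin 4) ℝ) with hMdef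
  have hM : M * M = 0 := by
    have : aeval A ((X ^ 2 - C t) ^ 2) = M * M := by
      rw [hMdef]
      simp [sq, Algebra.algebraMap_eq_smul_one]
    rw [← this, hCH]
  have hMsymm : Mᵀ = M := by
    rw [hMdef, Matrix.transpose_sub, Matrix.transpose_mul, hanti, Matrix.transpose_smul,
      Matrix.transpose_one, Matrix.neg_mul, Matrix.mul_neg, neg_neg]
  have hMcomm : ∀ i j, M j i = M i j := by
    intro i j
    have := congrFun (congrFun hMsymm i) j
    simpa [Matrix.transpose_apply] using this
  have hM0 : M = 0 := by
    have e1 : ∑ i, ∑ j, (M i j) ^ 2 = 0 := by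
      have e2 : Matrix.trace (M * M) = ∑ i, ∑ j, (M i j) ^ 2 := by
        simp only [Matrix.trace, Matrix.diag_apply, Matrix.mul_apply]
        refine Finset.sum_congr rfl fun i _ => Finset.sum_congr rfl fun j _ => ?_
        rw [sq, hMcomm i j]
      rw [← e2, hM, Matrix.trace_zero]
    ext i j
    have h1 : ∀ i ∈ Finset.univ, ∑ j, (M i j) ^ 2 = 0 := by
      rw [← Finset.sum_eq_zero_iff_of_nonneg]
      · exact e1
      · intro i _
        positivity
    have h2 : ∀ j ∈ Finset.univ, (M i j) ^ 2 = 0 := by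
      rw [← Finset.sum_eq_zero_iff_of_nonneg]
      · exact h1 i (Finset.mem_univ i)
      · intro j _
        positivity
    have := h2 j (Finset.mem_univ j)
    simpa [pow_eq_zero_iff] using this
  have hAA : A * A = t • (1 : Matrix (Fin 4) (Fin 4) ℝ) := by
    have := sub_eq_zero.mp hM0
    exact this
  have hAtA : Aᵀ * A = (-t) • (1 : Matrix (Fin 4) (Fin 4) ℝ) := by
    rw [hanti, Matrix.neg_mul, hAA, neg_smul]
  have hdiagAtA : ∀ j, ∑ k, (A k j) ^ 2 = -t := by
    intro j
    have h00 := congrFun (congrFun hAtA j) j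
    rw [Matrix.mul_apply] at h00
    simp only [Matrix.smul_apply, Matrix.one_apply_eq, smul_eq_mul, mul_one] at h00
    rw [← h00]
    refine Finset.sum_congr rfl fun k _ => ?_
    rw [Matrix.transpose_apply, sq]
  have htn : 0 ≤ -t := by
    rw [← hdiagAtA 0]
    positivity
  by_cases hA0 : A = 0
  · exact ⟨0, 1, by simp, by simp [hA0]⟩
  · have htpos : 0 < -t := by
      rcases lt_or_eq_of_le htn with h | h
      · exact h
      · exfalso
        apply hA0
        ext i j
        have h1 : ∀ k ∈ Finset.univ, (A k j) ^ 2 = 0 :=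
          (Finset.sum_eq_zero_iff_of_nonneg (fun k _ => by positivity)).mp
            (by rw [hdiagAtA j, ← h])
        have := h1 i (Finset.mem_univ i)
        simpa [pow_eq_zero_iff] using this
    set c := Real.sqrt (-t) with hcdef
    have hcpos : 0 < c := Real.sqrt_pos.mpr htpos
    have hcsq : c ^ 2 = -t := Real.sq_sqrt htn
    refine ⟨c, c⁻¹ • A, ?_, ?_⟩
    · rw [Matrix.transpose_smul, Matrix.smul_mul, Matrix.mul_smul, hAtA, smul_smul, smul_smul]
      have h1 : c⁻¹ * c⁻¹ * -t = 1 := by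
        rw [← hcsq]
        field_simp
      rw [h1, one_smul]
    · rw [smul_smul, mul_inv_cancel₀ (ne_of_gt hcpos), one_smul]
end

section
/- Let A be a 4×4 real matrix that is both orthogonal (AᵀA = 1) and antisymmetric (Aᵀ = -A). Then there exist real numbers a, b, c with a² + b² + c² = 1 such that either A = K₁(a,b,c) (a matrix of the first kind) or A = K₂(a,b,c) (a matrix of the second kind). -/
open Matrix

/-- A matrix of the first kind. -/
def K₁ (a b c : ℝ) : Matrix (Fin 4) (Fin 4) ℝ :=
  !![0,  a,  b,  c;
     -a, 0,  c,  -b;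
     -b, -c, 0,  a;
     -c, b,  -a, 0]

/-- A matrix of the second kind. -/
def K₂ (a b c : ℝ) : Matrix (Fin 4) (Fin 4) ℝ :=
  !![0,  a,  b,  c;
     -a, 0,  -c, b;
     -b, c,  0,  -a;
     -c, -b, a,  0]

private lemma sq_sq_eq_one {x : ℝ} (h : x ^ 2 * x ^ 2 = 1) : x ^ 2 = 1 := by
  nlinarith [sq_nonneg x, sq_nonneg (x ^ 2 - 1), sq_nonneg (x ^ 2 + 1)]

private lemma sum_three_sq_eq_zero {x y z : ℝ} (h : x ^ 2 + y ^ 2 + z ^ 2 = 0) :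
    x = 0 ∧ y = 0 ∧ z = 0 := by
  refine ⟨?_, ?_, ?_⟩ <;> nlinarith [sq_nonneg x, sq_nonneg y, sq_nonneg z]

/-- Every orthogonal antisymmetric `4×4` real matrix is of the first or the second kind,
with unit parameter vector. -/
theorem orthogonal_antisymmetric_two_kinds
    (A : Matrix (Fin 4) (Fin 4) ℝ)
    (horth : Aᵀ * A = 1)
    (hanti : Aᵀ = -A) :
    ∃ a b c : ℝ, a ^ 2 + b ^ 2 + c ^ 2 = 1 ∧ (A = K₁ a b c ∨ A = K₂ a b c) := by
  have hskew : ∀ i j, A j i = - A i j := fun i j => congrFun (congrFun hanti i) j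
  have h00 : A 0 0 = 0 := by have := hskew 0 0; linarith
  have h11 : A 1 1 = 0 := by have := hskew 1 1; linarith
  have h22 : A 2 2 = 0 := by have := hskew 2 2; linarith
  have h33 : A 3 3 = 0 := by have := hskew 3 3; linarith
  have e10 : A 1 0 = -A 0 1 := hskew 0 1
  have e20 : A 2 0 = -A 0 2 := hskew 0 2
  have e30 : A 3 0 = -A 0 3 := hskew 0 3
  have e21 : A 2 1 = -A 1 2 := hskew 1 2
  have e31 : A 3 1 = -A 1 3 := hskew 1 3
  have e32 : A 3 2 = -A 2 3 := hskew 2 3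
  have hA : A = !![A 0 0, A 0 1, A 0 2, A 0 3;
                   A 1 0, A 1 1, A 1 2, A 1 3;
                   A 2 0, A 2 1, A 2 2, A 2 3;
                   A 3 0, A 3 1, A 3 2, A 3 3] := (Matrix.etaExpand_eq A).symm
  rw [h00, h11, h22, h33, e10, e20, e30, e21, e31, e32] at hA
  have eq : ∀ i j, ∑ k, A k i * A k j = (1 : Matrix (Fin 4) (Fin 4) ℝ) i j := by
    intro i j
    have := congrFun (congrFun horth i) j
    simpa [Matrix.mul_apply, Matrix.transpose_apply] using this
  have q0 := eq 0 0
  have q1 := eq 1 1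
  have q2 := eq 2 2
  have q3 := eq 3 3
  simp (config := { decide := true }) only [Fin.sum_univ_four, Matrix.one_apply, e10, e20, e30,
    e21, e31, e32, h00, h11, h22, h33, if_true, if_false, neg_mul, mul_neg, neg_neg,
    mul_zero, zero_mul, add_zero, zero_add] at q0 q1 q2 q3
  -- determinant : det A = Pfaffian squared
  have hdetsq : A.det * A.det = 1 := by
    have := congrArg Matrix.det horth
    simpa [Matrix.det_mul, Matrix.det_transpose] using this
  have hdet : A.det = (A 0 1 * A 2 3 - A 0 2 * A 1 3 + A 0 3 * A 1 2) ^ 2 := by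
    rw [hA]
    simp [Matrix.det_succ_row_zero, Fin.sum_univ_succ, Fin.succAbove]
    ring
  have hs2 : (A 0 1 * A 2 3 - A 0 2 * A 1 3 + A 0 3 * A 1 2) ^ 2 = 1 := by
    refine sq_sq_eq_one ?_
    rw [← hdet]; exact hdetsq
  have hs : ((A 0 1 * A 2 3 - A 0 2 * A 1 3 + A 0 3 * A 1 2) - 1) *
      ((A 0 1 * A 2 3 - A 0 2 * A 1 3 + A 0 3 * A 1 2) + 1) = 0 := by
    linear_combination hs2
  refine ⟨A 0 1, A 0 2, A 0 3, by linear_combination q0, ?_⟩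
  rcases mul_eq_zero.1 hs with hs1 | hs1
  · -- Pfaffian = 1 : first kind
    left
    have hp : A 0 1 * A 2 3 - A 0 2 * A 1 3 + A 0 3 * A 1 2 = 1 := by linarith [hs1]
    have hsum : (A 1 2 - A 0 3) ^ 2 + (A 1 3 + A 0 2) ^ 2 + (A 2 3 - A 0 1) ^ 2 = 0 := by
      linear_combination (1/2) * q0 + (1/2) * q1 + (1/2) * q2 + (1/2) * q3 - 2 * hp
    obtain ⟨z1, z2, z3⟩ := sum_three_sq_eq_zero hsum
    have hdc : A 1 2 = A 0 3 := by linear_combination z1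
    have heb : A 1 3 = -A 0 2 := by linear_combination z2
    have hfa : A 2 3 = A 0 1 := by linear_combination z3
    rw [hdc, heb, hfa] at hA
    rw [hA, K₁]
    norm_num
    and_intros <;> rfl
  · -- Pfaffian = -1 : second kind
    right
    have hp : A 0 1 * A 2 3 - A 0 2 * A 1 3 + A 0 3 * A 1 2 = -1 := by linarith [hs1]
    have hsum : (A 1 2 + A 0 3) ^ 2 + (A 1 3 - A 0 2) ^ 2 + (A 2 3 + A 0 1) ^ 2 = 0 := by
      linear_combination (1/2) * q0 + (1/2) * q1 + (1/2) * q2 + (1/2) * q3 + 2 * hp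
    obtain ⟨z1, z2, z3⟩ := sum_three_sq_eq_zero hsum
    have hdc : A 1 2 = -A 0 3 := by linear_combination z1
    have heb : A 1 3 = A 0 2 := by linear_combination z2
    have hfa : A 2 3 = -A 0 1 := by linear_combination z3
    rw [hdc, heb, hfa] at hA
    rw [hA, K₂]
    norm_num
    and_intros <;> rfl
end

section
/- Let J := K₁(1,0,0), let B = K₂(a,b,c) be a matrix of the second kind with a² + b² + c² = 1, and let λ, μ be nonzero real numbers. Then λ • J + μ • B is not a scalar multiple of an orthogonal matrix: there do not exist a real number t and a 4×4 real matrix O with OᵀO = 1 such that λ • J + μ • B = t • O. -/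
open Matrix

/-- The particular matrix `J₀` of the first kind. -/
def J₀ : Matrix (Fin 4) (Fin 4) ℝ := K₁ 1 0 0

/-- A nontrivial linear combination of `J₀` and a matrix of the second kind is never
a scalar multiple of an orthogonal matrix. -/
theorem linear_combination_J_second_kind_not_multiple_orthogonal
    (a b c lam mu : ℝ)
    (hunit : a ^ 2 + b ^ 2 + c ^ 2 = 1)
    (hlam : lam ≠ 0) (hmu : mu ≠ 0) :
    ¬ ∃ (t : ℝ) (O : Matrix (Fin 4) (Fin 4) ℝ),
        Oᵀ * O = 1 ∧ lam • J₀ + mu • K₂ a b c = t • O := by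
  rintro ⟨t, O, hO, hM⟩
  set M : Matrix (Fin 4) (Fin 4) ℝ :=
    !![0, lam + mu*a, mu*b, mu*c;
       -(lam + mu*a), 0, -(mu*c), mu*b;
       -(mu*b), mu*c, 0, lam - mu*a;
       -(mu*c), -(mu*b), -(lam - mu*a), 0] with hMdef
  have hM' : lam • J₀ + mu • K₂ a b c = M := by
    ext i j
    fin_cases i <;> fin_cases j <;> simp [J₀, K₁, K₂, hMdef, Matrix.vecHead, Matrix.vecTail] <;> ring_nf
  have hT : Mᵀ = -M := by
    ext i j
    fin_cases i <;> fin_cases j <;> simp [hMdef, Matrix.vecHead, Matrix.vecTail]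
  have h2 : (-M) * M = (t * t) • (1 : Matrix (Fin 4) (Fin 4) ℝ) := by
    rw [← hT, hM'.symm, hM, transpose_smul, smul_mul, Matrix.mul_smul, hO, smul_smul]
  have e00 := congrFun (congrFun h2 0) 0
  have e22 := congrFun (congrFun h2 2) 2
  have e02 := congrFun (congrFun h2 0) 2
  have e03 := congrFun (congrFun h2 0) 3
  simp [hMdef, Matrix.mul_apply, Fin.sum_univ_four, Matrix.one_apply] at e00 e22 e02 e03
  have hne : lam * mu ≠ 0 := mul_ne_zero hlam hmu
  have ha : a = 0 := by
    have h : a * (lam * mu) = 0 := by linear_combination (e00 - e22) / 4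
    rcases mul_eq_zero.1 h with h' | h'
    · exact h'
    · exact absurd h' hne
  have hc : c = 0 := by
    have h : c * (lam * mu) = 0 := by linear_combination e02 / 2
    rcases mul_eq_zero.1 h with h' | h'
    · exact h'
    · exact absurd h' hne
  have hb : b = 0 := by
    have h : b * (lam * mu) = 0 := by linear_combination -e03 / 2
    rcases mul_eq_zero.1 h with h' | h'
    · exact h'
    · exact absurd h' hne
  rw [ha, hb, hc] at hunit
  norm_num at hunit
end

section
/- Let J := K₁(1,0,0) and let C := K₁(a,b,c) be a matrix of the first kind with a² + b² + c² = 1 and a ≠ 1 and a ≠ -1. A 4×4 real matrix A satisfies AᵀA = 1, A*J = J*A and A*C = C*A if and only if there exist complex numbers z₁, z₂ with |z₁|² + |z₂|² = 1 such that A = ρ(!![z₁, z₂; -conj z₂, conj z₁]), i.e., A is the real form of an SU(2) matrix. -/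
open Matrix

/-- The real form of a `2×2` complex matrix: each entry `x + iy` is replaced by the
`2×2` real block `!![x, -y; y, x]`. -/
def ρ (M : Matrix (Fin 2) (Fin 2) ℂ) : Matrix (Fin 4) (Fin 4) ℝ :=
  Matrix.of fun i j =>
    let z : ℂ := M ⟨i.val / 2, by have := i.isLt; omega⟩ ⟨j.val / 2, by have := j.isLt; omega⟩
    if i.val % 2 = 0 then
      if j.val % 2 = 0 then z.re else -z.im
    else
      if j.val % 2 = 0 then z.im else z.re

private lemma fin4_mk2 : (⟨2, by omega⟩ : Fin 4) = 2 := rfl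
private lemma fin4_mk3 : (⟨3, by omega⟩ : Fin 4) = 3 := rfl
private lemma fin4_val0 : ((0 : Fin 4) : ℕ) = 0 := rfl
private lemma fin4_val1 : ((1 : Fin 4) : ℕ) = 1 := rfl
private lemma fin4_val2 : ((2 : Fin 4) : ℕ) = 2 := rfl
private lemma fin4_val3 : ((3 : Fin 4) : ℕ) = 3 := rfl

set_option maxHeartbeats 1000000 in
/-- An orthogonal `4×4` real matrix commutes with `J₀` and with a matrix `C = K₁ a b c`
of the first kind (with unit parameter vector, `C` not a multiple of `J₀`) if and only
if it is the real form of an `SU(2)` matrix. -/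
theorem orthogonal_commuting_iff_SU2
    (a b c : ℝ) (hunit : a ^ 2 + b ^ 2 + c ^ 2 = 1) (ha : a ≠ 1) (ha' : a ≠ -1)
    (A : Matrix (Fin 4) (Fin 4) ℝ) :
    (Aᵀ * A = 1 ∧ A * J₀ = J₀ * A ∧ A * K₁ a b c = K₁ a b c * A) ↔
    ∃ z₁ z₂ : ℂ, ‖z₁‖ ^ 2 + ‖z₂‖ ^ 2 = 1 ∧
      A = ρ !![z₁, z₂; -(starRingEnd ℂ) z₂, (starRingEnd ℂ) z₁] := by

  constructor
  · rintro ⟨h1, h2, h3⟩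
    have hbc : b ^ 2 + c ^ 2 ≠ 0 := by
      have h1a : (1 - a) * (1 + a) ≠ 0 :=
        mul_ne_zero (sub_ne_zero.mpr (Ne.symm ha)) (by intro h; apply ha'; linarith)
      intro h; apply h1a; nlinarith
    -- entrywise equations from the commutation with J₀
    have E2 : ∀ i j : Fin 4, (A * J₀) i j = (J₀ * A) i j := fun i j => by rw [h2]
    have j01 := E2 0 0
    have j11 := E2 0 1
    have j12 := E2 0 2
    have j13 := E2 0 3
    have j21 := E2 2 0
    have j31 := E2 2 1
    have j32 := E2 2 2
    have j33 := E2 2 3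
    simp [J₀, K₁, Matrix.mul_apply, Fin.sum_univ_four, Matrix.vecHead, Matrix.vecTail] at j01 j11 j12 j13 j21 j31 j32 j33
    have hA01 : A 0 1 = -A 1 0 := by linarith
    have hA11 : A 1 1 = A 0 0 := by linarith
    have hA03 : A 0 3 = -A 1 2 := by linarith
    have hA13 : A 1 3 = A 0 2 := by linarith
    have hA21 : A 2 1 = -A 3 0 := by linarith
    have hA31 : A 3 1 = A 2 0 := by linarith
    have hA23 : A 2 3 = -A 3 2 := by linarith
    have hA33 : A 3 3 = A 2 2 := by linarith
    -- entrywise equations from the commutation with K₁ a b c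
    have E3 : ∀ i j : Fin 4, (A * K₁ a b c) i j = (K₁ a b c * A) i j := fun i j => by rw [h3]
    have f00 := E3 0 0
    have f01 := E3 0 1
    have f02 := E3 0 2
    have f03 := E3 0 3
    have f20 := E3 2 0
    have f22 := E3 2 2
    have f23 := E3 2 3
    have f30 := E3 3 0
    simp [K₁, Matrix.mul_apply, Fin.sum_univ_four, Matrix.vecHead, Matrix.vecTail] at f00 f01 f02 f03 f20 f22 f23 f30
    simp only [hA01, hA11, hA03, hA13, hA21, hA31, hA23, hA33] at f00 f01 f02 f03 f20 f22 f23 f30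
    have k22 : (b ^ 2 + c ^ 2) * (A 0 0 - A 2 2) = 0 := by
      linear_combination (b / 2) * f02 + (b / 2) * f20 + (c / 2) * f03 + (c / 2) * f30
    have k32 : (b ^ 2 + c ^ 2) * (A 1 0 + A 3 2) = 0 := by
      linear_combination (b / 2) * f03 - (b / 2) * f30 + (c / 2) * f20 - (c / 2) * f02
    have k20 : (b ^ 2 + c ^ 2) * (A 0 2 + A 2 0) = 0 := by
      linear_combination (b / 2) * f22 - (b / 2) * f00 + (c / 2) * f23 - (c / 2) * f01
    have k30 : (b ^ 2 + c ^ 2) * (A 1 2 - A 3 0) = 0 := by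
      linear_combination (c / 2) * f00 + (c / 2) * f22 - (b / 2) * f01 - (b / 2) * f23
    have h22 : A 2 2 = A 0 0 := by
      rcases mul_eq_zero.mp k22 with h | h; exact absurd h hbc; linarith
    have h32 : A 3 2 = -A 1 0 := by
      rcases mul_eq_zero.mp k32 with h | h; exact absurd h hbc; linarith
    have h20 : A 2 0 = -A 0 2 := by
      rcases mul_eq_zero.mp k20 with h | h; exact absurd h hbc; linarith
    have h30 : A 3 0 = A 1 2 := by
      rcases mul_eq_zero.mp k30 with h | h; exact absurd h hbc; linarith
    -- the norm condition
    have n := congrFun (congrFun h1 0) 0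
    simp only [Matrix.mul_apply, Matrix.transpose_apply, Fin.sum_univ_four,
      Matrix.one_apply_eq] at n
    refine ⟨⟨A 0 0, A 1 0⟩, ⟨A 0 2, A 1 2⟩, ?_, ?_⟩
    · rw [Complex.sq_norm, Complex.sq_norm, Complex.normSq_mk, Complex.normSq_mk]
      linear_combination n - (A 2 0 - A 0 2) * h20 - (A 3 0 + A 1 2) * h30
    · ext i j
      fin_cases i <;> fin_cases j <;>
        simp only [ρ, Matrix.of_apply, Fin.mk_zero, Fin.mk_one, Fin.isValue] <;>
        norm_num [fin4_mk2, fin4_mk3, Matrix.cons_val_zero, Matrix.cons_val_one,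
          Matrix.head_cons, Complex.conj_re, Complex.conj_im, Complex.neg_re,
          Complex.neg_im] <;>
        linarith [hA01, hA11, hA03, hA13, hA21, hA31, hA23, hA33, h22, h32, h20, h30]
  · rintro ⟨z₁, z₂, hn, rfl⟩
    rw [Complex.sq_norm, Complex.sq_norm, Complex.normSq_apply, Complex.normSq_apply] at hn
    have hρ : ρ !![z₁, z₂; -(starRingEnd ℂ) z₂, (starRingEnd ℂ) z₁] =
        !![z₁.re, -z₁.im, z₂.re, -z₂.im;
           z₁.im, z₁.re, z₂.im, z₂.re;
           -z₂.re, -z₂.im, z₁.re, z₁.im;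
           z₂.im, -z₂.re, -z₁.im, z₁.re] := by
      ext i j
      fin_cases i <;> fin_cases j <;>
        norm_num [ρ, fin4_mk2, fin4_mk3, fin4_val0, fin4_val1, fin4_val2, fin4_val3,
          Matrix.vecHead, Matrix.vecTail] <;> rfl
    rw [hρ]
    refine ⟨?_, ?_, ?_⟩ <;>
      · ext i j
        fin_cases i <;> fin_cases j <;>
          simp [J₀, K₁, Matrix.mul_apply, Fin.sum_univ_four, Matrix.vecHead,
            Matrix.vecTail, Matrix.one_apply, fin4_mk2, fin4_mk3] <;>
          first
            | ring1
            | linear_combination hn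
end

section
/- Let J := K₁(1,0,0) and let C := K₁(a,b,c) be a matrix of the first kind with a² + b² + c² = 1 and a ≠ 1 and a ≠ -1. Suppose A = ρ(!![z₁, z₂; z₃, z₄]) for complex numbers z₁, z₂, z₃, z₄ (so that A*J = J*A automatically). Then A*C = C*A if and only if conj z₂ = -z₃ and conj z₁ = z₄. -/
open Matrix

/-- For `A = ρ !![z₁, z₂; z₃, z₄]` and `C = K₁ a b c` with unit parameter vector and
`a ≠ ±1`, the matrix `A` commutes with `C` iff `conj z₂ = -z₃` and `conj z₁ = z₄`. -/
theorem real_form_commutes_with_C_iff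
    (a b c : ℝ) (hunit : a ^ 2 + b ^ 2 + c ^ 2 = 1) (ha : a ≠ 1) (ha' : a ≠ -1)
    (z₁ z₂ z₃ z₄ : ℂ) (A : Matrix (Fin 4) (Fin 4) ℝ)
    (hA : A = ρ !![z₁, z₂; z₃, z₄]) :
    A * K₁ a b c = K₁ a b c * A ↔
      (starRingEnd ℂ) z₂ = -z₃ ∧ (starRingEnd ℂ) z₁ = z₄ := by
  subst hA
  have hbc : b ^ 2 + c ^ 2 ≠ 0 := by
    intro h
    have h1 : (a - 1) * (a + 1) = 0 := by nlinarith
    rcases mul_eq_zero.1 h1 with h2 | h2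
    · exact ha (by linarith)
    · exact ha' (by linarith)
  constructor
  · intro h
    have H := fun i j => Matrix.ext_iff.2 h i j
    have e00 := H 0 0; have e01 := H 0 1; have e02 := H 0 2; have e03 := H 0 3
    simp only [ρ, K₁, Matrix.mul_apply, Fin.sum_univ_four, Matrix.of_apply,
      Matrix.cons_val', Matrix.cons_val_zero, Matrix.cons_val_one, Matrix.head_cons,
      Matrix.empty_val', Matrix.cons_val_fin_one, Matrix.head_fin_const,
      Matrix.cons_val_two, Matrix.tail_cons, Matrix.cons_val_three,
      show ((3:Fin 4):ℕ) = 3 from rfl, show ((2:Fin 4):ℕ) = 2 from rfl,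
      show ((1:Fin 4):ℕ) = 1 from rfl, show ((0:Fin 4):ℕ) = 0 from rfl] at e00 e01 e02 e03
    norm_num at e00 e01 e02 e03
    have hu : z₂.re + z₃.re = 0 := by
      have key : (b ^ 2 + c ^ 2) * (z₂.re + z₃.re) = 0 := by linear_combination (-b) * e00 - c * e01
      exact (mul_eq_zero.1 key).resolve_left hbc
    have hv : z₂.im - z₃.im = 0 := by
      have key : (b ^ 2 + c ^ 2) * (z₂.im - z₃.im) = 0 := by linear_combination c * e00 - b * e01
      exact (mul_eq_zero.1 key).resolve_left hbc
    have hp : z₁.re - z₄.re = 0 := by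
      have key : (b ^ 2 + c ^ 2) * (z₁.re - z₄.re) = 0 := by linear_combination b * e02 + c * e03
      exact (mul_eq_zero.1 key).resolve_left hbc
    have hq : z₁.im + z₄.im = 0 := by
      have key : (b ^ 2 + c ^ 2) * (z₁.im + z₄.im) = 0 := by linear_combination (-c) * e02 + b * e03
      exact (mul_eq_zero.1 key).resolve_left hbc
    constructor <;> apply Complex.ext <;> simp <;> linarith
  · rintro ⟨h2, h1⟩
    have hr2 := congrArg Complex.re h2
    have hi2 := congrArg Complex.im h2
    have hr1 := congrArg Complex.re h1
    have hi1 := congrArg Complex.im h1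
    simp at hr2 hi2 hr1 hi1
    have h3r : z₃.re = -z₂.re := by linarith
    have h3i : z₃.im = z₂.im := by linarith
    have h4r : z₄.re = z₁.re := by linarith
    have h4i : z₄.im = -z₁.im := by linarith
    ext i j
    fin_cases i <;> fin_cases j <;>
      simp [ρ, K₁, Matrix.mul_apply, Fin.sum_univ_four,
        show ((3:Fin 4):ℕ) = 3 from rfl, show ((2:Fin 4):ℕ) = 2 from rfl,
        show ((1:Fin 4):ℕ) = 1 from rfl, show ((0:Fin 4):ℕ) = 0 from rfl] <;>
      simp only [h3r, h3i, h4r, h4i] <;> ring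
end

section
/- Let J := K₁(1,0,0) and let C := K₁(a,b,c) be a matrix of the first kind with a² + b² + c² = 1 and a ≠ 1 and a ≠ -1. If A is a 4×4 real matrix with AᵀA = 1 that commutes with both J and C, then A commutes with every matrix of the first kind: A * K₁(a',b',c') = K₁(a',b',c') * A for all real numbers a', b', c'. -/
open Matrix

set_option maxHeartbeats 1000000 in
/-- An orthogonal matrix commuting with `J₀` and with a matrix of the first kind with
unit parameter vector and `a ≠ ±1` commutes with every matrix of the first kind. -/
theorem orthogonal_commuting_J_C_commutes_with_all_first_kind
    (a b c : ℝ) (hunit : a ^ 2 + b ^ 2 + c ^ 2 = 1) (ha : a ≠ 1) (ha' : a ≠ -1)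
    (A : Matrix (Fin 4) (Fin 4) ℝ)
    (horth : Aᵀ * A = 1)
    (hJ : A * J₀ = J₀ * A)
    (hC : A * K₁ a b c = K₁ a b c * A) :
    ∀ a' b' c' : ℝ, A * K₁ a' b' c' = K₁ a' b' c' * A := by
  intro a' b' c'
  set K : Matrix (Fin 4) (Fin 4) ℝ := K₁ 0 1 0 with hKdef
  set L : Matrix (Fin 4) (Fin 4) ℝ := K₁ 0 0 1 with hLdef
  have hdecomp : ∀ x y z : ℝ, K₁ x y z = x • J₀ + y • K + z • L := by
    intro x y z
    ext i j
    fin_cases i <;> fin_cases j <;>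
      simp [K₁, J₀, hKdef, hLdef, Matrix.add_apply, Matrix.smul_apply,
        Matrix.vecHead, Matrix.vecTail] <;> ring
  have hJK : J₀ * K = -L := by
    ext i j
    fin_cases i <;> fin_cases j <;>
      simp [K₁, J₀, hKdef, hLdef, Matrix.mul_apply, Fin.sum_univ_four,
        Matrix.vecHead, Matrix.vecTail]
  have hJL : J₀ * L = K := by
    ext i j
    fin_cases i <;> fin_cases j <;>
      simp [K₁, J₀, hKdef, hLdef, Matrix.mul_apply, Fin.sum_univ_four,
        Matrix.vecHead, Matrix.vecTail]
  -- A commutes with M := b•K + c•L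
  have hM : A * (b • K + c • L) = (b • K + c • L) * A := by
    have h := hC
    rw [hdecomp a b c] at h
    rw [add_assoc] at h
    have h2 : A * (a • J₀) + A * (b • K + c • L)
        = (a • J₀) * A + (b • K + c • L) * A := by
      rw [← mul_add, h, add_mul]
    have hAJ : A * (a • J₀) = (a • J₀) * A := by
      rw [mul_smul_comm, smul_mul_assoc, hJ]
    rw [hAJ] at h2
    exact add_left_cancel h2
  -- A commutes with J₀ * M = c•K - b•L
  have hM2 : A * (c • K - b • L) = (c • K - b • L) * A := by
    have key : J₀ * (b • K + c • L) = c • K - b • L := by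
      rw [mul_add, mul_smul_comm, mul_smul_comm, hJK, hJL]
      module
    calc A * (c • K - b • L) = A * (J₀ * (b • K + c • L)) := by rw [key]
      _ = (A * J₀) * (b • K + c • L) := by rw [mul_assoc]
      _ = J₀ * (A * (b • K + c • L)) := by rw [hJ, mul_assoc]
      _ = J₀ * ((b • K + c • L) * A) := by rw [hM]
      _ = (J₀ * (b • K + c • L)) * A := by rw [mul_assoc]
      _ = (c • K - b • L) * A := by rw [key]
  have hd : b ^ 2 + c ^ 2 ≠ 0 := by
    intro h0
    have hb : b = 0 := by nlinarith [sq_nonneg b, sq_nonneg c]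
    have hc : c = 0 := by nlinarith [sq_nonneg b, sq_nonneg c]
    have hfac : (a - 1) * (a + 1) = 0 := by nlinarith
    rcases mul_eq_zero.mp hfac with h1 | h1
    · exact ha (by linarith)
    · exact ha' (by linarith)
  have hK : A * K = K * A := by
    have h1 : A * ((b ^ 2 + c ^ 2) • K) = ((b ^ 2 + c ^ 2) • K) * A := by
      have key : (b ^ 2 + c ^ 2) • K
          = b • (b • K + c • L) + c • (c • K - b • L) := by module
      rw [key, mul_add, add_mul, mul_smul_comm, mul_smul_comm,
        smul_mul_assoc, smul_mul_assoc, hM, hM2]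
    rw [mul_smul_comm, smul_mul_assoc] at h1
    exact smul_right_injective _ hd h1
  have hL : A * L = L * A := by
    have h1 : A * ((b ^ 2 + c ^ 2) • L) = ((b ^ 2 + c ^ 2) • L) * A := by
      have key : (b ^ 2 + c ^ 2) • L
          = c • (b • K + c • L) - b • (c • K - b • L) := by module
      rw [key, mul_sub, sub_mul, mul_smul_comm, mul_smul_comm,
        smul_mul_assoc, smul_mul_assoc, hM, hM2]
    rw [mul_smul_comm, smul_mul_assoc] at h1
    exact smul_right_injective _ hd h1
  rw [hdecomp a' b' c', mul_add, mul_add, add_mul, add_mul,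
    mul_smul_comm, mul_smul_comm, mul_smul_comm,
    smul_mul_assoc, smul_mul_assoc, smul_mul_assoc, hJ, hK, hL]
end
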